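/- Let m ≤ n and let X_{a,b} for (a,b) ∈ [m]×[n] be Bernoulli random variables with success probability p, such that X_{a,b} is mutually independent from the family {X_{a',b'} : a ≠ a' and b ≠ b'}. Let X = Σ_{(a,b)} X_{a,b} and μ = E[X]. Then P(X ≤ μ/2) ≤ n·exp(−μ/(8n)). -/

import Mathlib

open MeasureTheory ProbabilityTheory

section Aux

variable {Ω : Type*} [MeasurableSpace Ω] (P : Measure Ω) [IsProbabilityMeasure P]

lemma bern_eq_indicator (Y : Ω → ℝ) (h01 : ∀ ω, Y ω = 0 ∨ Y ω = 1) :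
    Y = Set.indicator {ω | Y ω = 1} (fun _ => (1 : ℝ)) := by
  funext ω
  rcases h01 ω with h | h
  · rw [Set.indicator_of_notMem, h]
    simp only [Set.mem_setOf_eq, h]
    exact zero_ne_one
  · rw [Set.indicator_of_mem, h]
    simpa using h

lemma bern_integral (Y : Ω → ℝ) (hm : Measurable Y) (h01 : ∀ ω, Y ω = 0 ∨ Y ω = 1)
    (p : ℝ) (hp0 : 0 ≤ p) (hp : P {ω | Y ω = 1} = ENNReal.ofReal p) :
    ∫ ω, Y ω ∂P = p := by
  have hs : MeasurableSet {ω | Y ω = 1} := hm (measurableSet_singleton 1)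
  calc ∫ ω, Y ω ∂P = ∫ ω, Set.indicator {ω | Y ω = 1} (fun _ => (1:ℝ)) ω ∂P := by
        rw [← bern_eq_indicator Y h01]
    _ = (P {ω | Y ω = 1}).toReal := integral_indicator_one hs
    _ = p := by rw [hp, ENNReal.toReal_ofReal hp0]

lemma bern_integrable (Y : Ω → ℝ) (hm : Measurable Y) (h01 : ∀ ω, Y ω = 0 ∨ Y ω = 1) :
    Integrable Y P := by
  refine Integrable.mono' (integrable_const (1:ℝ)) hm.aestronglyMeasurable
    (Filter.Eventually.of_forall fun ω => ?_)
  rcases h01 ω with h | h <;> simp [h]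

lemma bern_mgf (Y : Ω → ℝ) (hm : Measurable Y) (h01 : ∀ ω, Y ω = 0 ∨ Y ω = 1)
    (p : ℝ) (hp0 : 0 ≤ p) (hp : P {ω | Y ω = 1} = ENNReal.ofReal p) (t : ℝ) :
    mgf Y P t = 1 + (Real.exp t - 1) * p := by
  have hint : Integrable Y P := bern_integrable P Y hm h01
  have heq : ∀ ω, Real.exp (t * Y ω) = 1 + (Real.exp t - 1) * Y ω := by
    intro ω
    rcases h01 ω with h | h <;> simp [h] <;> ring
  calc mgf Y P t = ∫ ω, Real.exp (t * Y ω) ∂P := rfl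
    _ = ∫ ω, (1 + (Real.exp t - 1) * Y ω) ∂P := by
        exact integral_congr_ae (Filter.Eventually.of_forall heq)
    _ = ∫ _ω, (1:ℝ) ∂P + ∫ ω, (Real.exp t - 1) * Y ω ∂P := by
        exact integral_add (integrable_const 1) (hint.const_mul _)
    _ = 1 + (Real.exp t - 1) * p := by
        rw [integral_const, integral_const_mul, bern_integral P Y hm h01 p hp0 hp]
        simp

/-- Chernoff lower-tail bound for a sum of `N` independent Bernoulli(`p`) variables. -/
lemma chernoff_bern {ι : Type*} [Fintype ι] (X : ι → Ω → ℝ) (N : ℕ)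
    (hcard : Fintype.card ι = N)
    (hmeas : ∀ i, Measurable (X i)) (h01 : ∀ i ω, X i ω = 0 ∨ X i ω = 1)
    (p : ℝ) (hp0 : 0 ≤ p) (hp1 : p ≤ 1)
    (hp : ∀ i, P {ω | X i ω = 1} = ENNReal.ofReal p)
    (hindep : iIndepFun X P) :
    (P {ω | ∑ i, X i ω ≤ N * p / 2}).toReal ≤ Real.exp (-(N * p) / 8) := by
  classical
  set t : ℝ := -Real.log 2 with ht_def
  have ht : t ≤ 0 := neg_nonpos.mpr (Real.log_nonneg (by norm_num))
  have hexp_t : Real.exp t = 1 / 2 := by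
    rw [ht_def, Real.exp_neg, Real.exp_log (by norm_num : (0:ℝ) < 2)]
    norm_num
  -- nonnegativity of each X i
  have hXnn : ∀ i ω, 0 ≤ X i ω := by
    intro i ω; rcases h01 i ω with h | h <;> simp [h]
  -- the sum as a function
  set S : Ω → ℝ := ∑ i ∈ Finset.univ, X i with hS_def
  have hS_apply : ∀ ω, S ω = ∑ i, X i ω := by
    intro ω; simp [hS_def, Finset.sum_apply]
  have hSnn : ∀ ω, 0 ≤ S ω := fun ω => by
    rw [hS_apply]; exact Finset.sum_nonneg fun i _ => hXnn i ω
  have hSmeas : Measurable S := by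
    have : S = fun ω => ∑ i, X i ω := funext hS_apply
    rw [this]
    exact Finset.measurable_sum _ fun i _ => hmeas i
  have hint : Integrable (fun ω => Real.exp (t * S ω)) P := by
    refine Integrable.mono' (integrable_const (1:ℝ))
      ((hSmeas.const_mul t).exp).aestronglyMeasurable
      (Filter.Eventually.of_forall fun ω => ?_)
    rw [Real.norm_eq_abs, abs_of_pos (Real.exp_pos _)]
    calc Real.exp (t * S ω) ≤ Real.exp 0 :=
          Real.exp_le_exp.mpr (mul_nonpos_of_nonpos_of_nonneg ht (hSnn ω))
      _ = 1 := Real.exp_zero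
  have hset : {ω | ∑ i, X i ω ≤ (N:ℝ) * p / 2} = {ω | S ω ≤ (N:ℝ) * p / 2} := by
    ext ω; simp [hS_apply]
  rw [hset]
  have hchern := measure_le_le_exp_mul_mgf (μ := P) (X := S) (t := t)
    ((N:ℝ) * p / 2) ht hint
  -- compute the mgf of S
  have hmgf : mgf S P t = (1 + (Real.exp t - 1) * p) ^ N := by
    rw [hS_def, hindep.mgf_sum hmeas]
    rw [Finset.prod_congr rfl (fun i _ => bern_mgf P (X i) (hmeas i) (h01 i) p hp0 (hp i) t)]
    rw [Finset.prod_const, Finset.card_univ, hcard]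
  set q : ℝ := 1 + (Real.exp t - 1) * p with hq_def
  have hq0 : 0 ≤ q := by rw [hq_def, hexp_t]; nlinarith
  have hq_le : q ≤ Real.exp ((Real.exp t - 1) * p) := by
    rw [hq_def, add_comm]; exact Real.add_one_le_exp _
  have hNp : (0:ℝ) ≤ (N:ℝ) * p := mul_nonneg (Nat.cast_nonneg N) hp0
  calc (P {ω | S ω ≤ (N:ℝ) * p / 2}).toReal
      ≤ Real.exp (-t * ((N:ℝ) * p / 2)) * mgf S P t := hchern
    _ = Real.exp (-t * ((N:ℝ) * p / 2)) * q ^ N := by rw [hmgf]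
    _ ≤ Real.exp (-t * ((N:ℝ) * p / 2)) * Real.exp ((Real.exp t - 1) * p) ^ N :=
        mul_le_mul_of_nonneg_left (pow_le_pow_left₀ hq0 hq_le N) (Real.exp_pos _).le
    _ = Real.exp (-t * ((N:ℝ) * p / 2) + (N:ℝ) * ((Real.exp t - 1) * p)) := by
        rw [← Real.exp_nat_mul, ← Real.exp_add]
    _ ≤ Real.exp (-((N:ℝ) * p) / 8) := by
        apply Real.exp_le_exp.mpr
        rw [ht_def, hexp_t]
        have hlog : Real.log 2 < 0.6931471808 := Real.log_two_lt_d9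
        nlinarith [hNp, hlog]
end Aux

/-- Lemma 2.4 (grid concentration): Bernoulli random variables indexed by `[m] × [n]`,
each with success probability `p`, such that any subfamily whose members pairwise differ
in both coordinates is mutually independent.  Then `P(X ≤ μ/2) ≤ n · exp(−μ/(8n))`. -/
theorem stmt_0 {Ω : Type*} [MeasurableSpace Ω] (P : Measure Ω) [IsProbabilityMeasure P]
    (m n : ℕ) (hn : 1 ≤ n) (hmn : m ≤ n) (p : ℝ)
    (X : Fin m → Fin n → Ω → ℝ)
    (hmeas : ∀ a b, Measurable (X a b))
    (hind : ∀ a b ω, X a b ω = 0 ∨ X a b ω = 1)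
    (hp : ∀ a b, P {ω | X a b ω = 1} = ENNReal.ofReal p)
    (hindep : ∀ S : Finset (Fin m × Fin n),
      (∀ i ∈ S, ∀ j ∈ S, i ≠ j → i.1 ≠ j.1 ∧ i.2 ≠ j.2) →
      iIndepFun (fun i : S => X i.1.1 i.1.2) P)
    (μ : ℝ) (hμ : μ = m * n * p) :
    (P {ω | ∑ a : Fin m, ∑ b : Fin n, X a b ω ≤ μ / 2}).toReal
      ≤ n * Real.exp (-μ / (8 * n)) := by
  classical
  have hn0 : (0:ℝ) < n := by exact_mod_cast hn
  have hLHS_le_one : (P {ω | ∑ a : Fin m, ∑ b : Fin n, X a b ω ≤ μ / 2}).toReal ≤ 1 := by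
    have h1 : P {ω | ∑ a : Fin m, ∑ b : Fin n, X a b ω ≤ μ / 2} ≤ 1 := prob_le_one
    calc (P {ω | ∑ a : Fin m, ∑ b : Fin n, X a b ω ≤ μ / 2}).toReal
        ≤ (1 : ENNReal).toReal := ENNReal.toReal_mono (by simp) h1
      _ = 1 := by simp
  rcases le_or_gt μ 0 with hμ0 | hμ0
  · -- trivial case μ ≤ 0
    calc (P {ω | ∑ a : Fin m, ∑ b : Fin n, X a b ω ≤ μ / 2}).toReal ≤ 1 := hLHS_le_one
      _ ≤ (n:ℝ) * 1 := by
        rw [mul_one]; exact_mod_cast hn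
      _ ≤ n * Real.exp (-μ / (8 * n)) := by
        gcongr
        have : (0:ℝ) ≤ -μ / (8 * n) := div_nonneg (by linarith) (by positivity)
        calc (1:ℝ) = Real.exp 0 := Real.exp_zero.symm
          _ ≤ Real.exp (-μ / (8 * n)) := Real.exp_le_exp.mpr this
  · -- main case μ > 0
    have hp0 : 0 < p := by
      by_contra h
      push_neg at h
      have hmn0 : (0:ℝ) ≤ (m:ℝ) * n := by positivity
      have : μ ≤ 0 := by
        rw [hμ]
        nlinarith [mul_nonneg hmn0 (neg_nonneg.mpr h)]
      linarith
    have hm0 : 0 < m := by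
      rcases Nat.eq_zero_or_pos m with h | h
      · subst h; simp at hμ; linarith
      · exact h
    have hp1 : p ≤ 1 := by
      have h := hp ⟨0, hm0⟩ ⟨0, hn⟩
      have hle : P {ω | X ⟨0, hm0⟩ ⟨0, hn⟩ ω = 1} ≤ 1 := prob_le_one
      rw [h] at hle
      exact_mod_cast (ENNReal.ofReal_le_one.mp hle)
    haveI : NeZero n := ⟨Nat.one_le_iff_ne_zero.mp hn⟩
    -- cast Fin m into Fin n
    have hcast : ∀ a : Fin m, (a : ℕ) < n := fun a => lt_of_lt_of_le a.2 hmn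
    set ca : Fin m → Fin n := fun a => ⟨a, hcast a⟩ with hca
    -- diagonals
    set g : Fin n → Fin m → Fin m × Fin n := fun k a => (a, ca a + k) with hg
    have hg_inj : ∀ k, Function.Injective (g k) := by
      intro k a a' h
      exact congrArg Prod.fst h
    set D : Fin n → Finset (Fin m × Fin n) := fun k => Finset.univ.image (g k) with hD
    -- each diagonal satisfies the pairwise-distinct condition
    have hDpair : ∀ k, ∀ i ∈ D k, ∀ j ∈ D k, i ≠ j → i.1 ≠ j.1 ∧ i.2 ≠ j.2 := by
      intro k i hi j hj hij
      simp only [hD, Finset.mem_image, Finset.mem_univ, true_and] at hi hj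
      obtain ⟨a, rfl⟩ := hi
      obtain ⟨a', rfl⟩ := hj
      have ha : a ≠ a' := fun h => hij (by rw [h])
      constructor
      · simpa [hg] using ha
      · simp only [hg]
        intro h
        apply ha
        have hca' : ca a = ca a' := add_right_cancel h
        have hval : ((ca a : Fin n) : ℕ) = ((ca a' : Fin n) : ℕ) := congrArg Fin.val hca'
        exact Fin.ext hval
    -- total sum decomposes over diagonals
    have hsum : ∀ ω, ∑ a : Fin m, ∑ b : Fin n, X a b ω
        = ∑ k : Fin n, ∑ a : Fin m, X a (ca a + k) ω := by
      intro ω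
      calc ∑ a : Fin m, ∑ b : Fin n, X a b ω
          = ∑ a : Fin m, ∑ k : Fin n, X a (ca a + k) ω :=
            Finset.sum_congr rfl fun a _ =>
              (Equiv.sum_comp (Equiv.addLeft (ca a)) (fun b => X a b ω)).symm
        _ = ∑ k : Fin n, ∑ a : Fin m, X a (ca a + k) ω := Finset.sum_comm
    -- event inclusion
    have hincl : {ω | ∑ a : Fin m, ∑ b : Fin n, X a b ω ≤ μ / 2}
        ⊆ ⋃ k : Fin n, {ω | ∑ a : Fin m, X a (ca a + k) ω ≤ μ / (2 * n)} := by
      intro ω hω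
      simp only [Set.mem_setOf_eq] at hω
      by_contra h
      simp only [Set.mem_iUnion, Set.mem_setOf_eq, not_exists, not_le] at h
      have hne : (Finset.univ : Finset (Fin n)).Nonempty := ⟨⟨0, hn⟩, Finset.mem_univ _⟩
      have hlt : ∑ _k : Fin n, (μ / (2 * n)) < ∑ k : Fin n, ∑ a : Fin m, X a (ca a + k) ω :=
        Finset.sum_lt_sum_of_nonempty hne fun k _ => h k
      rw [Finset.sum_const, Finset.card_univ, Fintype.card_fin, ← hsum ω] at hlt
      have heq : n • (μ / (2 * (n:ℝ))) = μ / 2 := by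
        rw [nsmul_eq_mul]
        field_simp
      rw [heq] at hlt
      linarith
    -- per-diagonal Chernoff bound
    have hdiag : ∀ k : Fin n, (P {ω | ∑ a : Fin m, X a (ca a + k) ω ≤ μ / (2 * n)}).toReal
        ≤ Real.exp (-μ / (8 * n)) := by
      intro k
      have hcard : Fintype.card (D k) = m := by
        rw [Fintype.card_coe]
        simp only [hD]
        rw [Finset.card_image_of_injective _ (hg_inj k), Finset.card_univ, Fintype.card_fin]
      have hTeq : ∀ ω, ∑ a : Fin m, X a (ca a + k) ω = ∑ i : D k, X i.1.1 i.1.2 ω := by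
        intro ω
        rw [Finset.sum_coe_sort (D k) (fun i => X i.1 i.2 ω)]
        simp only [hD]
        rw [Finset.sum_image (fun a _ b _ h => hg_inj k h)]
      have hμ2n : μ / (2 * n) = (m : ℝ) * p / 2 := by
        rw [hμ]; field_simp
      have hμ8n : -μ / (8 * n) = -((m:ℝ) * p) / 8 := by
        rw [hμ]; field_simp
      have hseteq : {ω | ∑ a : Fin m, X a (ca a + k) ω ≤ μ / (2 * n)}
          = {ω | ∑ i : D k, X i.1.1 i.1.2 ω ≤ (m:ℝ) * p / 2} := by
        ext ω; rw [Set.mem_setOf_eq, Set.mem_setOf_eq, hTeq, hμ2n]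
      rw [hseteq, hμ8n]
      exact chernoff_bern P (fun i : D k => X i.1.1 i.1.2) m hcard
        (fun i => hmeas i.1.1 i.1.2) (fun i ω => hind i.1.1 i.1.2 ω)
        p hp0.le hp1 (fun i => hp i.1.1 i.1.2)
        (hindep (D k) (hDpair k))
    -- union bound and conclusion
    calc (P {ω | ∑ a : Fin m, ∑ b : Fin n, X a b ω ≤ μ / 2}).toReal
        ≤ (P (⋃ k : Fin n, {ω | ∑ a : Fin m, X a (ca a + k) ω ≤ μ / (2 * n)})).toReal := by
          apply ENNReal.toReal_mono (measure_ne_top _ _)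
          exact measure_mono hincl
      _ ≤ (∑ k : Fin n, P {ω | ∑ a : Fin m, X a (ca a + k) ω ≤ μ / (2 * n)}).toReal := by
          apply ENNReal.toReal_mono
          · exact ENNReal.sum_ne_top.mpr fun k _ => measure_ne_top _ _
          · exact measure_iUnion_fintype_le P _
      _ = ∑ k : Fin n, (P {ω | ∑ a : Fin m, X a (ca a + k) ω ≤ μ / (2 * n)}).toReal := by
          rw [ENNReal.toReal_sum fun k _ => measure_ne_top _ _]
      _ ≤ ∑ _k : Fin n, Real.exp (-μ / (8 * n)) :=
          Finset.sum_le_sum fun k _ => hdiag k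
      _ = n * Real.exp (-μ / (8 * n)) := by
          rw [Finset.sum_const, Finset.card_univ, Fintype.card_fin, nsmul_eq_mul]
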